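/- arXiv:1106.4753 — 2 statements merged into one kernel-verified Lean document; each statement's English description precedes it below -/
import Mathlib

section
/- Let R, S, T be rows in N^n. Compute S·T = A·B, then R·A = C·D (left-first reduction), and also R·S = G·H, then H·T = I·J (right-first reduction), using the vector insertion algorithm. Prove that A_p ≤ I_p for all 1 ≤ p ≤ n, where the subscript denotes partial sums. -/
open Finset

/-- Partial sum `Φ_p = φ_1 + ⋯ + φ_p` of a multiplicity vector. -/
def PS (f : ℕ → ℕ) (p : ℕ) : ℕ := ∑ i ∈ Finset.Icc 1 p, f i

/-- Partial sums `X_p` of the bumped row in the vector insertion `W·Z = X·Y`: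
`X_0 = X_1 = 0`, `X_{p+1} = min(Z_p, X_p + w_{p+1})`. -/
def capX (W Z : ℕ → ℕ) : ℕ → ℕ
  | 0 => 0
  | p + 1 => if p = 0 then 0 else min (PS Z p) (capX W Z p + W (p + 1))

/-- Component `x_p = X_p - X_{p-1} = min(Z_{p-1} - X_{p-1}, w_p)` (with `x_1 = 0`). -/
def xcomp (W Z : ℕ → ℕ) (p : ℕ) : ℕ := capX W Z p - capX W Z (p - 1)

/-- Component `y_q = w_q + z_q - x_q`. -/
def ycomp (W Z : ℕ → ℕ) (q : ℕ) : ℕ := W q + Z q - xcomp W Z q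

/-- `A` from `S·T = A·B`. -/
def rowA (S T : ℕ → ℕ) : ℕ → ℕ := xcomp S T
/-- `B` from `S·T = A·B`. -/
def rowB (S T : ℕ → ℕ) : ℕ → ℕ := ycomp S T
/-- `C` from `R·A = C·D`. -/
def rowC (R S T : ℕ → ℕ) : ℕ → ℕ := xcomp R (rowA S T)
/-- `D` from `R·A = C·D`. -/
def rowD (R S T : ℕ → ℕ) : ℕ → ℕ := ycomp R (rowA S T)
/-- `E` from `D·B = E·F`. -/
def rowE (R S T : ℕ → ℕ) : ℕ → ℕ := xcomp (rowD R S T) (rowB S T)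
/-- `F` from `D·B = E·F`. -/
def rowF (R S T : ℕ → ℕ) : ℕ → ℕ := ycomp (rowD R S T) (rowB S T)
/-- `G` from `R·S = G·H`. -/
def rowG (R S : ℕ → ℕ) : ℕ → ℕ := xcomp R S
/-- `H` from `R·S = G·H`. -/
def rowH (R S : ℕ → ℕ) : ℕ → ℕ := ycomp R S
/-- `I` from `H·T = I·J`. -/
def rowI (R S T : ℕ → ℕ) : ℕ → ℕ := xcomp (rowH R S) T
/-- `J` from `H·T = I·J`. -/
def rowJ (R S T : ℕ → ℕ) : ℕ → ℕ := ycomp (rowH R S) T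
/-- `K` from `G·I = K·L`. -/
def rowK (R S T : ℕ → ℕ) : ℕ → ℕ := xcomp (rowG R S) (rowI R S T)
/-- `L` from `G·I = K·L`. -/
def rowL (R S T : ℕ → ℕ) : ℕ → ℕ := ycomp (rowG R S) (rowI R S T)


lemma capX_succ_le (W Z : ℕ → ℕ) (p : ℕ) : capX W Z (p + 1) ≤ PS Z p := by
  rw [capX]
  split
  · exact Nat.zero_le _
  · exact min_le_left _ _

lemma capX_mono (W Z : ℕ → ℕ) (p : ℕ) : capX W Z p ≤ capX W Z (p + 1) := by
  cases p with
  | zero => simp [capX]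
  | succ q =>
    have h1 : capX W Z (q + 1 + 1)
        = min (PS Z (q + 1)) (capX W Z (q + 1) + W (q + 1 + 1)) := by
      rw [capX]; simp
    rw [h1]
    refine le_min ?_ (Nat.le_add_right _ _)
    calc capX W Z (q + 1) ≤ PS Z q := capX_succ_le W Z q
      _ ≤ PS Z (q + 1) := by
        unfold PS
        exact Finset.sum_le_sum_of_subset (Finset.Icc_subset_Icc le_rfl (Nat.le_succ q))

lemma PS_xcomp (W Z : ℕ → ℕ) (p : ℕ) : PS (xcomp W Z) p = capX W Z p := by
  induction p with
  | zero => simp [PS, capX]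
  | succ q ih =>
    have : PS (xcomp W Z) (q + 1) = PS (xcomp W Z) q + xcomp W Z (q + 1) := by
      unfold PS
      rw [Finset.sum_Icc_succ_top (Nat.succ_le_succ (Nat.zero_le q))]
    rw [this, ih, xcomp]
    have := capX_mono W Z q
    simp only [Nat.add_sub_cancel]
    omega

lemma capX_mono_W (W W' Z : ℕ → ℕ) (h : ∀ q, W q ≤ W' q) (p : ℕ) :
    capX W Z p ≤ capX W' Z p := by
  induction p with
  | zero => simp [capX]
  | succ q ih =>
    rw [capX, capX]
    split
    · exact le_rfl
    · exact min_le_min le_rfl (Nat.add_le_add ih (h _))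

lemma xcomp_le (W Z : ℕ → ℕ) (q : ℕ) : xcomp W Z q ≤ W q := by
  cases q with
  | zero => simp [xcomp, capX]
  | succ p =>
    unfold xcomp
    simp only [Nat.add_sub_cancel]
    rw [capX]
    split
    · omega
    · have := min_le_right (PS Z p) (capX W Z p + W (p + 1))
      omega

lemma S_le_rowH (R S : ℕ → ℕ) (q : ℕ) : S q ≤ rowH R S q := by
  unfold rowH ycomp
  have := xcomp_le R S q
  omega

/-- With `S·T = A·B`, `R·A = C·D` and `R·S = G·H`, `H·T = I·J`,
one has `A_p ≤ I_p` for all `1 ≤ p ≤ n`. -/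
theorem A_le_I (n : ℕ) (R S T : ℕ → ℕ) :
    ∀ p, 1 ≤ p → p ≤ n → PS (rowA S T) p ≤ PS (rowI R S T) p := by
  intro p _ _
  rw [rowA, rowI, PS_xcomp, PS_xcomp]
  exact capX_mono_W S (rowH R S) T (S_le_rowH R S) p
end

section
/- In the setting of the two reduction orders of R·S·T, with D·B = E·F and G·I = K·L, prove that e_2 = l_2 = min(s_1 + t_1, t_1 + r_2, r_2 + s_2), where e_2 = min(b_1, d_2) and l_2 = g_2 + i_2. -/
open Finset

lemma PS1 (Z : ℕ → ℕ) : PS Z 1 = Z 1 := by simp [PS]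

lemma capX1 (W Z : ℕ → ℕ) : capX W Z 1 = 0 := by simp [capX]

lemma capX2 (W Z : ℕ → ℕ) : capX W Z 2 = min (Z 1) (W 2) := by
  simp [capX, capX1, PS1]

lemma x1 (W Z : ℕ → ℕ) : xcomp W Z 1 = 0 := by simp [xcomp, capX1, capX]

lemma x2 (W Z : ℕ → ℕ) : xcomp W Z 2 = min (Z 1) (W 2) := by
  simp [xcomp, capX1, capX2]

lemma y1 (W Z : ℕ → ℕ) : ycomp W Z 1 = W 1 + Z 1 := by simp [ycomp, x1]

lemma y2 (W Z : ℕ → ℕ) : ycomp W Z 2 = W 2 + Z 2 - min (Z 1) (W 2) := by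
  simp [ycomp, x2]

/-- `e_2 = l_2 = min(s_1 + t_1, t_1 + r_2, r_2 + s_2)`. -/
theorem e2_eq_l2 (n : ℕ) (hn : 2 ≤ n) (R S T : ℕ → ℕ) :
    rowE R S T 2 = rowL R S T 2 ∧
    rowE R S T 2 = min (S 1 + T 1) (min (T 1 + R 2) (R 2 + S 2)) := by
  have hA2 : rowA S T 2 = min (T 1) (S 2) := x2 S T
  have hB1 : rowB S T 1 = S 1 + T 1 := y1 S T
  have hA1 : rowA S T 1 = 0 := x1 S T
  have hD2 : rowD R S T 2 = R 2 + rowA S T 2 - min (rowA S T 1) (R 2) := by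
    simp [rowD, ycomp, x2]
  have hE2 : rowE R S T 2 = min (rowB S T 1) (rowD R S T 2) := x2 _ _
  have hG2 : rowG R S 2 = min (S 1) (R 2) := x2 R S
  have hH2 : rowH R S 2 = R 2 + S 2 - min (S 1) (R 2) := y2 R S
  have hI2 : rowI R S T 2 = min (T 1) (rowH R S 2) := x2 _ _
  have hI1 : rowI R S T 1 = 0 := x1 _ _
  have hL2 : rowL R S T 2 = rowG R S 2 + rowI R S T 2 - min (rowI R S T 1) (rowG R S 2) := by
    simp [rowL, ycomp, x2]
  rw [hE2, hL2, hI1, hI2, hH2, hG2, hD2, hB1, hA1, hA2]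
  omega
end
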